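/- Let w ∈ S_n be Grassmannian with unique descent at k and define the partition λ(w) by λ_{k−i+1} = w(i) − i for 1 ≤ i ≤ k. Then the coessential set of v_P(w) equals {(k − c + λ_{c+1}, k) : c is an inner corner of λ(w)}, and the corresponding rank numbers satisfy r_{k−c+λ_{c+1}, k} = k − c. Here c ∈ {1,…,k−1} is an inner corner when λ_c > λ_{c+1}, and c = 0 is an inner corner when λ_1 < n − k (with λ_{1} read for c = 0). -/

import Mathlib

open Equiv

/-- `w` is a Grassmannian permutation of `{1, …, n}` with unique descent at `k`:
`w` fixes everything outside `[1, n]`, is increasing on `[1, k]` and on `[k+1, n]`,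
and has a descent at `k`. -/
def IsGrassmannian (n k : ℕ) (w : Equiv.Perm ℕ) : Prop :=
  (∀ i, i ∉ Set.Icc 1 n → w i = i) ∧
  (∀ i j, 1 ≤ i → i < j → j ≤ k → w i < w j) ∧
  (∀ i j, k + 1 ≤ i → i < j → j ≤ n → w i < w j) ∧
  w (k + 1) < w k

/-- The rank number `r_{p,q}(v) = #{j ≤ q : v(j) ≤ p}`. -/
def rankNum (v : Equiv.Perm ℕ) (p q : ℕ) : ℕ :=
  ((Finset.Icc 1 q).filter (fun j => v j ≤ p)).card

/-- Fulton's coessential set of a permutation of `{1, …, n}`: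
`Coess(v) = {(p,q) : v⁻¹(p) ≤ q < v⁻¹(p+1) and v(q) ≤ p < v(q+1)}`,
with `1 ≤ p, q ≤ n - 1`. -/
def Coess (n : ℕ) (v : Equiv.Perm ℕ) : Set (ℕ × ℕ) :=
  {pq | 1 ≤ pq.1 ∧ pq.1 < n ∧ 1 ≤ pq.2 ∧ pq.2 < n ∧
    v⁻¹ pq.1 ≤ pq.2 ∧ pq.2 < v⁻¹ (pq.1 + 1) ∧
    v pq.2 ≤ pq.1 ∧ pq.1 < v (pq.2 + 1)}

/-- The parabolic subgroup of permutations generated by the adjacent transpositions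
`(j, j+1)` for `j ∈ S`. -/
def permParabolic (S : Set ℕ) : Subgroup (Equiv.Perm ℕ) :=
  Subgroup.closure ((fun j => Equiv.swap j (j + 1)) '' S)

/-- `v` is the maximal length representative of the coset `w · W_S`: it lies in the
coset and has a descent at every position of `S`. -/
def IsMaxRep (S : Set ℕ) (w v : Equiv.Perm ℕ) : Prop :=
  (∃ u ∈ permParabolic S, v = w * u) ∧ ∀ j ∈ S, v (j + 1) < v j

/-- The positions of the simple roots generating the maximal parabolic `P` with
`W_P = S_k × S_{n-k}`. -/
def SP (n k : ℕ) : Set ℕ := {j | 1 ≤ j ∧ j < n ∧ j ≠ k}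

/-- The positions `j` of the simple roots `α_j ∈ Δ_w = {α_j : w(j+1) = w(j)+1, j ≠ k}`
generating the parabolic subgroup `Q`. -/
def DeltaW (n k : ℕ) (w : Equiv.Perm ℕ) : Set ℕ :=
  {j | 1 ≤ j ∧ j < n ∧ j ≠ k ∧ w (j + 1) = w j + 1}

/-- The partition `λ(w)` of a Grassmannian permutation `w` with descent at `k`:
`λ_{k−i+1} = w(i) − i` for `1 ≤ i ≤ k`, i.e. `λ_j = w(k+1−j) − (k+1−j)`. -/
def lamOf (k : ℕ) (w : Equiv.Perm ℕ) (j : ℕ) : ℕ :=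
  w (k + 1 - j) - (k + 1 - j)

/-- `c` is an inner corner of `λ(w)`: either `1 ≤ c ≤ k−1` and `λ_c > λ_{c+1}`, or
`c = 0` and `λ_1 < n − k`. -/
def IsInnerCorner (n k : ℕ) (w : Equiv.Perm ℕ) (c : ℕ) : Prop :=
  (c = 0 ∧ lamOf k w 1 < n - k) ∨
  (1 ≤ c ∧ c < k ∧ lamOf k w (c + 1) < lamOf k w c)

theorem Equiv.Perm.apply_inv_self {α : Type*} (f : Equiv.Perm α) (x : α) : f (f⁻¹ x) = x :=
  Equiv.apply_symm_apply f x

theorem Equiv.Perm.inv_apply_self {α : Type*} (f : Equiv.Perm α) (x : α) : f⁻¹ (f x) = x :=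
  Equiv.symm_apply_apply f x

theorem Equiv.apply_inv_self {α : Type*} (f : Equiv.Perm α) (x : α) : f (f⁻¹ x) = x :=
  Equiv.apply_symm_apply f x

lemma mem_parabolic_blocks {n k : ℕ} (hkn : k ≤ n) {u : Equiv.Perm ℕ}
    (hu : u ∈ permParabolic (SP n k)) :
    (∀ x, (1 ≤ x ∧ x ≤ k) ↔ (1 ≤ u x ∧ u x ≤ k)) ∧
    (∀ x, (k + 1 ≤ x ∧ x ≤ n) ↔ (k + 1 ≤ u x ∧ u x ≤ n)) ∧
    (∀ x, ¬(1 ≤ x ∧ x ≤ n) → u x = x) := by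
  refine Subgroup.closure_induction ?_ ?_ ?_ ?_ hu
  · rintro g ⟨j, ⟨hj1, hj2, hj3⟩, rfl⟩
    refine ⟨fun x => ?_, fun x => ?_, fun x hx => ?_⟩ <;>
      rw [Equiv.swap_apply_def] <;> split_ifs <;> omega
  · exact ⟨fun x => Iff.rfl, fun x => Iff.rfl, fun x _ => rfl⟩
  · rintro a b _ _ ⟨ha1, ha2, ha3⟩ ⟨hb1, hb2, hb3⟩
    refine ⟨fun x => ?_, fun x => ?_, fun x hx => ?_⟩
    · exact (hb1 x).trans (ha1 (b x))
    · exact (hb2 x).trans (ha2 (b x))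
    · show a (b x) = x
      rw [hb3 x hx, ha3 x hx]
  · rintro a _ ⟨ha1, ha2, ha3⟩
    refine ⟨fun x => ?_, fun x => ?_, fun x hx => ?_⟩
    · have := ha1 (a⁻¹ x); rw [Equiv.Perm.apply_inv_self] at this; exact this.symm
    · have := ha2 (a⁻¹ x); rw [Equiv.Perm.apply_inv_self] at this; exact this.symm
    · by_cases hy : 1 ≤ a⁻¹ x ∧ a⁻¹ x ≤ n
      · exfalso
        rcases Nat.lt_or_ge (a⁻¹ x) (k + 1) with h | h
        · have := (ha1 (a⁻¹ x)).1 ⟨hy.1, by omega⟩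
          rw [Equiv.Perm.apply_inv_self] at this; omega
        · have := (ha2 (a⁻¹ x)).1 ⟨h, hy.2⟩
          rw [Equiv.Perm.apply_inv_self] at this; omega
      · have h1 := ha3 (a⁻¹ x) hy
        have h2 : a (a⁻¹ x) = x := Equiv.Perm.apply_inv_self a x
        rw [h1] at h2
        rw [h2]

/-- Let `w ∈ S_n` be Grassmannian with unique descent at `k`, with
partition `λ(w)` given by `λ_{k−i+1} = w(i) − i`.  Then the coessential set of
`v_P(w)` equals `{(k − c + λ_{c+1}, k) : c an inner corner of λ(w)}`, and the
corresponding rank numbers satisfy `r_{k−c+λ_{c+1}, k} = k − c`. -/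
theorem coess_from_inner_corners
    (n k : ℕ) (w v : Equiv.Perm ℕ)
    (hk1 : 1 ≤ k) (hkn : k < n)
    (hG : IsGrassmannian n k w)
    (hv : IsMaxRep (SP n k) w v) :
    Coess n v = {pq | ∃ c, IsInnerCorner n k w c ∧
        pq = (k - c + lamOf k w (c + 1), k)} ∧
    (∀ c, IsInnerCorner n k w c →
        rankNum v (k - c + lamOf k w (c + 1)) k = k - c) := by
  obtain ⟨⟨u, hu, hvw⟩, hdesc⟩ := hv
  obtain ⟨hfix, hw1, hw2, hwdesc⟩ := hG
  obtain ⟨hb1, hb2, hbf⟩ := mem_parabolic_blocks (Nat.le_of_lt hkn) hu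
  have hva : ∀ x, v x = w (u x) := fun x => by rw [hvw]; rfl
  -- w maps [1,n] into itself
  have hwin : ∀ x, 1 ≤ x → x ≤ n → 1 ≤ w x ∧ w x ≤ n := by
    intro x h1 h2
    by_contra hc
    have hwx : w x ∉ Set.Icc 1 n := by rw [Set.mem_Icc]; exact hc
    have := w.injective (hfix (w x) hwx)
    omega
  -- w is "surjective" onto [1,n]
  have hwsurj : ∀ y, 1 ≤ y → y ≤ n → ∃ x, 1 ≤ x ∧ x ≤ n ∧ w x = y := by
    intro y h1 h2
    refine ⟨w⁻¹ y, ?_, ?_, w.apply_inv_self y⟩ <;>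
    · by_contra hc
      have hni : w⁻¹ y ∉ Set.Icc 1 n := by
        rw [Set.mem_Icc]
        intro h
        rcases Nat.lt_or_ge (w⁻¹ y) 1 with _ | _ <;> first | exact hc h.1 | skip
        all_goals omega
      have := hfix _ hni
      rw [w.apply_inv_self] at this
      rw [Set.mem_Icc] at hni
      omega
  -- v fixes things outside [1,n]
  have hvfix : ∀ x, x ∉ Set.Icc 1 n → v x = x := by
    intro x hx
    have hx' : ¬(1 ≤ x ∧ x ≤ n) := by rwa [Set.mem_Icc] at hx
    rw [hva, hbf x hx', hfix x hx]
  -- v⁻¹ maps [1,n] into itself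
  have hvinvin : ∀ y, 1 ≤ y → y ≤ n → 1 ≤ v⁻¹ y ∧ v⁻¹ y ≤ n := by
    intro y h1 h2
    by_contra hc
    have hni : v⁻¹ y ∉ Set.Icc 1 n := by rw [Set.mem_Icc]; exact hc
    have := hvfix _ hni
    have h2' : v (v⁻¹ y) = y := v.apply_inv_self y
    rw [this] at h2'
    rw [Set.mem_Icc] at hni
    omega
  -- w i ≥ i on [1,k]
  have hwge : ∀ i, 1 ≤ i → i ≤ k → i ≤ w i := by
    intro i
    induction i with
    | zero => omega
    | succ m ih =>
      intro _ h2
      by_cases hm : m = 0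
      · subst hm; exact (hwin 1 le_rfl (by omega)).1
      · have h3 := ih (by omega) (by omega)
        have h4 := hw1 m (m + 1) (by omega) (by omega) h2
        omega
  -- v strictly decreasing on [1,k]
  have vmono1 : ∀ i j, 1 ≤ i → i < j → j ≤ k → v j < v i := by
    intro i j h1 hij hjk
    induction j with
    | zero => omega
    | succ m ih =>
      have hd := hdesc m ⟨by omega, by omega, by omega⟩
      by_cases him : i = m
      · subst him; exact hd
      · have := ih (by omega) (by omega)
        omega
  -- v strictly decreasing on [k+1,n]
  have vmono2 : ∀ i j, k + 1 ≤ i → i < j → j ≤ n → v j < v i := by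
    intro i j h1 hij hjn
    induction j with
    | zero => omega
    | succ m ih =>
      have hd := hdesc m ⟨by omega, by omega, by omega⟩
      by_cases him : i = m
      · subst him; exact hd
      · have := ih (by omega) (by omega)
        omega
  -- block membership transfer between v and w
  have hmem1 : ∀ p, (∃ x, 1 ≤ x ∧ x ≤ k ∧ v x = p) ↔ (∃ i, 1 ≤ i ∧ i ≤ k ∧ w i = p) := by
    intro p
    constructor
    · rintro ⟨x, h1, h2, rfl⟩
      obtain ⟨h3, h4⟩ := (hb1 x).1 ⟨h1, h2⟩
      exact ⟨u x, h3, h4, (hva x).symm⟩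
    · rintro ⟨i, h1, h2, rfl⟩
      have he : u (u⁻¹ i) = i := Equiv.Perm.apply_inv_self u i
      have := hb1 (u⁻¹ i)
      rw [he] at this
      obtain ⟨h3, h4⟩ := this.2 ⟨h1, h2⟩
      exact ⟨u⁻¹ i, h3, h4, by rw [hva, he]⟩
  have hmem2 : ∀ p, (∃ x, k + 1 ≤ x ∧ x ≤ n ∧ v x = p) ↔
      (∃ j, k + 1 ≤ j ∧ j ≤ n ∧ w j = p) := by
    intro p
    constructor
    · rintro ⟨x, h1, h2, rfl⟩
      obtain ⟨h3, h4⟩ := (hb2 x).1 ⟨h1, h2⟩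
      exact ⟨u x, h3, h4, (hva x).symm⟩
    · rintro ⟨j, h1, h2, rfl⟩
      have he : u (u⁻¹ j) = j := Equiv.Perm.apply_inv_self u j
      have := hb2 (u⁻¹ j)
      rw [he] at this
      obtain ⟨h3, h4⟩ := this.2 ⟨h1, h2⟩
      exact ⟨u⁻¹ j, h3, h4, by rw [hva, he]⟩
  -- the main membership criterion
  have main : ∀ p, (∃ i, 1 ≤ i ∧ i ≤ k ∧ w i = p) → (∃ j, k + 1 ≤ j ∧ j ≤ n ∧ w j = p + 1) →
      (p, k) ∈ Coess n v := by
    rintro p hp1 hp2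
    obtain ⟨x, hx1, hx2, hxe⟩ := (hmem1 p).2 hp1
    obtain ⟨y, hy1, hy2, hye⟩ := (hmem2 (p + 1)).2 hp2
    obtain ⟨i, hi1, hi2, hie⟩ := hp1
    obtain ⟨j, hj1, hj2, hje⟩ := hp2
    have hpl : 1 ≤ p := by have := hwin i hi1 (by omega); omega
    have hpr : p < n := by have := hwin j (by omega) hj2; omega
    have hvinvp : v⁻¹ p = x := by rw [← hxe, Equiv.Perm.inv_apply_self]
    have hvinvp1 : v⁻¹ (p + 1) = y := by rw [← hye, Equiv.Perm.inv_apply_self]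
    have hvk : v k ≤ p := by
      rcases eq_or_lt_of_le hx2 with h | h
      · rw [← h, hxe]
      · have := vmono1 x k hx1 h le_rfl; omega
    have hvk1 : p < v (k + 1) := by
      rcases eq_or_lt_of_le hy1 with h | h
      · rw [h, hye]; omega
      · have := vmono2 (k + 1) y le_rfl h hy2; omega
    show 1 ≤ p ∧ p < n ∧ 1 ≤ k ∧ k < n ∧ v⁻¹ p ≤ k ∧ k < v⁻¹ (p + 1) ∧ v k ≤ p ∧ p < v (k + 1)
    exact ⟨hpl, hpr, hk1, hkn, by omega, by omega, hvk, hvk1⟩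
  -- corner data
  have corner_repr : ∀ c, IsInnerCorner n k w c →
      1 ≤ k - c ∧ k - c + lamOf k w (c + 1) = w (k - c) ∧
      (∃ j, k + 1 ≤ j ∧ j ≤ n ∧ w j = w (k - c) + 1) := by
    rintro c (⟨rfl, hlam⟩ | ⟨hc1, hc2, hlam⟩)
    · simp only [Nat.sub_zero, Nat.zero_add]
      have hlam1 : lamOf k w 1 = w k - k := by
        unfold lamOf; rw [show k + 1 - 1 = k from by omega]
      have hwk := hwge k hk1 le_rfl
      have hwkn : w k < n := by rw [hlam1] at hlam; omega
      obtain ⟨j, hj1, hj2, hje⟩ := hwsurj (w k + 1) (by omega) (by omega)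
      have hjk : k + 1 ≤ j := by
        by_contra hcc
        rcases Nat.lt_or_ge j k with h | h
        · have := hw1 j k hj1 h le_rfl; omega
        · have hjek : j = k := by omega
          rw [hjek] at hje; omega
      refine ⟨hk1, ?_, ⟨j, hjk, hj2, hje⟩⟩
      rw [hlam1]; omega
    · have hi1 : 1 ≤ k - c := by omega
      have hi2 : k - c < k := by omega
      have hl1 : lamOf k w (c + 1) = w (k - c) - (k - c) := by
        unfold lamOf; rw [show k + 1 - (c + 1) = k - c from by omega]
      have hl2 : lamOf k w c = w (k - c + 1) - (k - c + 1) := by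
        unfold lamOf; rw [show k + 1 - c = k - c + 1 from by omega]
      have hwi := hwge (k - c) hi1 (by omega)
      have hwi1 := hwge (k - c + 1) (by omega) (by omega)
      have hmono := hw1 (k - c) (k - c + 1) hi1 (by omega) (by omega)
      have hgap : w (k - c) + 1 < w (k - c + 1) := by
        rw [hl1, hl2] at hlam; omega
      have hwn := hwin (k - c + 1) (by omega) (by omega)
      obtain ⟨j, hj1, hj2, hje⟩ := hwsurj (w (k - c) + 1) (by omega) (by omega)
      have hjk : k + 1 ≤ j := by
        by_contra hcc
        rcases Nat.lt_trichotomy j (k - c) with h | h | h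
        · have := hw1 j (k - c) hj1 h (by omega); omega
        · rw [h] at hje; omega
        · rcases Nat.lt_or_ge (k - c + 1) j with h' | h'
          · have := hw1 (k - c + 1) j (by omega) h' (by omega); omega
          · have hj' : j = k - c + 1 := by omega
            rw [hj'] at hje; omega
      refine ⟨hi1, ?_, ⟨j, hjk, hj2, hje⟩⟩
      rw [hl1]; omega
  constructor
  · ext ⟨p, q⟩
    simp only [Coess, Set.mem_setOf_eq, Prod.mk.injEq]
    constructor
    · rintro ⟨hp1, hpn, hq1, hqn, hC, hD, hE, hF⟩
      have hqk : q = k := by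
        by_contra h
        have := hdesc q ⟨hq1, hqn, h⟩
        omega
      rw [hqk] at hq1 hqn hC hD hE hF ⊢
      have hvp1 : 1 ≤ v⁻¹ p := by
        by_contra h
        have h0 : v⁻¹ p = 0 := by omega
        have hz : v 0 = 0 := hvfix 0 (by rw [Set.mem_Icc]; omega)
        have := v.apply_inv_self p
        rw [h0, hz] at this
        omega
      have hpw : ∃ i, 1 ≤ i ∧ i ≤ k ∧ w i = p :=
        (hmem1 p).1 ⟨v⁻¹ p, hvp1, hC, v.apply_inv_self p⟩
      have hpw2 : ∃ j, k + 1 ≤ j ∧ j ≤ n ∧ w j = p + 1 := by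
        refine (hmem2 (p + 1)).1 ⟨v⁻¹ (p + 1), by omega, ?_, v.apply_inv_self (p + 1)⟩
        exact (hvinvin (p + 1) (by omega) (by omega)).2
      obtain ⟨i, hi1, hik, hip⟩ := hpw
      obtain ⟨j, hj1, hjn, hjp⟩ := hpw2
      have hwi := hwge i hi1 hik
      have hwjn := hwin j (by omega) hjn
      refine ⟨k - i, ?_, ?_, rfl⟩
      · unfold IsInnerCorner
        by_cases hik' : i = k
        · left
          refine ⟨by omega, ?_⟩
          have hlam1 : lamOf k w 1 = w k - k := by
            unfold lamOf; rw [show k + 1 - 1 = k from by omega]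
          rw [hik'] at hip
          have hwk := hwge k hk1 le_rfl
          omega
        · right
          refine ⟨by omega, by omega, ?_⟩
          have hl1 : lamOf k w (k - i + 1) = w i - i := by
            unfold lamOf; rw [show k + 1 - (k - i + 1) = i from by omega]
          have hl2 : lamOf k w (k - i) = w (i + 1) - (i + 1) := by
            unfold lamOf; rw [show k + 1 - (k - i) = i + 1 from by omega]
          have hmono := hw1 i (i + 1) hi1 (by omega) (by omega)
          have hne : w (i + 1) ≠ w i + 1 := by
            intro h
            have hh : w (i + 1) = w j := by omega
            have := w.injective hh
            omega
          have hwi1 := hwge (i + 1) (by omega) (by omega)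
          rw [hl1, hl2]
          omega
      · have hl1 : lamOf k w (k - i + 1) = w i - i := by
          unfold lamOf; rw [show k + 1 - (k - i + 1) = i from by omega]
        rw [hl1]
        omega
    · rintro ⟨c, hc, hp, hq⟩
      obtain ⟨hi1, heq, hj⟩ := corner_repr c hc
      have hm := main (k - c + lamOf k w (c + 1))
        ⟨k - c, hi1, by omega, heq.symm⟩ (by rw [heq]; exact hj)
      rw [hp, hq]
      exact hm
  · intro c hc
    obtain ⟨hi1, heq, hj⟩ := corner_repr c hc
    rw [heq]
    unfold rankNum
    have step1 : ((Finset.Icc 1 k).filter (fun x => v x ≤ w (k - c))).card =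
        ((Finset.Icc 1 k).filter (fun x => w x ≤ w (k - c))).card := by
      apply Finset.card_bij (fun a _ => u a)
      · intro a ha
        rw [Finset.mem_filter, Finset.mem_Icc] at ha ⊢
        obtain ⟨⟨h1, h2⟩, h3⟩ := ha
        refine ⟨(hb1 a).1 ⟨h1, h2⟩, ?_⟩
        rw [← hva]; exact h3
      · intro a _ b _ h
        exact u.injective h
      · intro b hb
        rw [Finset.mem_filter, Finset.mem_Icc] at hb
        obtain ⟨⟨h1, h2⟩, h3⟩ := hb
        have he : u (u⁻¹ b) = b := Equiv.Perm.apply_inv_self u b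
        have hmem := hb1 (u⁻¹ b)
        rw [he] at hmem
        refine ⟨u⁻¹ b, ?_, he⟩
        rw [Finset.mem_filter, Finset.mem_Icc]
        refine ⟨hmem.2 ⟨h1, h2⟩, ?_⟩
        rw [hva, he]; exact h3
    have step2 : (Finset.Icc 1 k).filter (fun x => w x ≤ w (k - c)) = Finset.Icc 1 (k - c) := by
      ext x
      rw [Finset.mem_filter, Finset.mem_Icc, Finset.mem_Icc]
      constructor
      · rintro ⟨⟨h1, h2⟩, h3⟩
        refine ⟨h1, ?_⟩
        by_contra h
        have := hw1 (k - c) x hi1 (by omega) h2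
        omega
      · rintro ⟨h1, h2⟩
        refine ⟨⟨h1, by omega⟩, ?_⟩
        rcases eq_or_lt_of_le h2 with h | h
        · rw [h]
        · exact le_of_lt (hw1 x (k - c) h1 h (by omega))
    rw [step1, step2, Nat.card_Icc]
    omega
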